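/- Let f be a continuous function on 𝕋 whose Fourier series converges uniformly, with U-norm ‖f‖_U = sup_N ‖S_N(f)‖_{C(𝕋)}. Then for every integer n, the function e_n f (where e_n(t) = e^{int}) also has uniformly convergent Fourier series and ‖e_n f‖_U ≤ c·‖f‖_U·log(|n|+2), where c > 0 is an absolute constant. -/

import Mathlib

open MeasureTheory Filter

/-- The `k`-th Fourier coefficient of a function on the circle, identified with a
`2π`-periodic function on `ℝ`: `f̂(k) = (1/2π) ∫_{-π}^{π} f(t) e^{-ikt} dt`. -/
noncomputable def fourierCoef (f : ℝ → ℂ) (k : ℤ) : ℂ :=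
  (1 / (2 * Real.pi)) * ∫ t in (-Real.pi)..Real.pi, f t * Complex.exp (-(k : ℂ) * Complex.I * t)

/-- The `N`-th partial sum of the Fourier series: `S_N(f)(t) = ∑_{|k| ≤ N} f̂(k) e^{ikt}`. -/
noncomputable def partialFourierSum (f : ℝ → ℂ) (N : ℕ) (t : ℝ) : ℂ :=
  ∑ k ∈ Finset.Icc (-(N : ℤ)) (N : ℤ), fourierCoef f k * Complex.exp ((k : ℂ) * Complex.I * t)

/-- The norm of the space `U(𝕋)`: `‖f‖_U = sup_N ‖S_N(f)‖_{C(𝕋)}`. -/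
noncomputable def uNorm (f : ℝ → ℂ) : ℝ :=
  ⨆ N : ℕ, ⨆ t : ℝ, ‖partialFourierSum f N t‖

open Complex

noncomputable def eI (k : ℤ) (t : ℝ) : ℂ := Complex.exp ((k : ℂ) * Complex.I * t)

lemma eI_norm (k : ℤ) (t : ℝ) : ‖eI k t‖ = 1 := by
  simp [eI, Complex.norm_exp]

lemma eI_cont (k : ℤ) : Continuous (eI k) := by unfold eI; fun_prop

lemma eI_mul (j k : ℤ) (t : ℝ) : eI j t * eI k t = eI (j + k) t := by
  simp only [eI, ← Complex.exp_add]; congr 1; push_cast; ring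

lemma eI_zero (t : ℝ) : eI 0 t = 1 := by simp [eI]

lemma eI_sub (k : ℤ) (t s : ℝ) : eI (-k) s * eI k t = eI k (t - s) := by
  simp only [eI, ← Complex.exp_add]; congr 1; push_cast; ring

lemma norm_two_pi_inv : ‖(1 / (2 * (Real.pi:ℂ)))‖ = 1 / (2 * Real.pi) := by
  rw [norm_div, norm_one, norm_mul, Complex.norm_real]
  simp [abs_of_pos Real.pi_pos]

lemma fourierCoef_eq (f : ℝ → ℂ) (k : ℤ) :
    fourierCoef f k = (1 / (2 * Real.pi)) * ∫ t in (-Real.pi)..Real.pi, f t * eI (-k) t := by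
  rw [fourierCoef]
  congr 1
  apply intervalIntegral.integral_congr
  intro t _
  simp only [eI]; congr 2; push_cast; ring

lemma partialFourierSum_eq (f : ℝ → ℂ) (N : ℕ) (t : ℝ) :
    partialFourierSum f N t = ∑ k ∈ Finset.Icc (-(N : ℤ)) (N : ℤ), fourierCoef f k * eI k t := rfl

lemma fourierCoef_norm_le (f : ℝ → ℂ) {B : ℝ} (hB : ∀ s, ‖f s‖ ≤ B) (k : ℤ) :
    ‖fourierCoef f k‖ ≤ B := by
  have hπ : (0:ℝ) < Real.pi := Real.pi_pos
  rw [fourierCoef_eq]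
  have h1 : ‖∫ t in (-Real.pi)..Real.pi, f t * eI (-k) t‖ ≤ B * |Real.pi - (-Real.pi)| := by
    apply intervalIntegral.norm_integral_le_of_norm_le_const
    intro x _
    rw [norm_mul, eI_norm, mul_one]; exact hB x
  rw [norm_mul, norm_two_pi_inv]
  have habs : |Real.pi - (-Real.pi)| = 2 * Real.pi := by rw [abs_of_pos] <;> linarith
  rw [habs] at h1
  calc 1 / (2 * Real.pi) * ‖∫ t in (-Real.pi)..Real.pi, f t * eI (-k) t‖
      ≤ 1 / (2 * Real.pi) * (B * (2 * Real.pi)) := by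
        apply mul_le_mul_of_nonneg_left h1; positivity
    _ = B := by field_simp

lemma fourierCoef_shift (f : ℝ → ℂ) (a k : ℤ) :
    fourierCoef (fun s => eI a s * f s) k = fourierCoef f (k - a) := by
  rw [fourierCoef_eq, fourierCoef_eq]
  congr 1
  apply intervalIntegral.integral_congr
  intro t _
  simp only [eI, ← Complex.exp_add, mul_assoc, mul_comm (Complex.exp _) (f t), ← mul_assoc]
  rw [mul_assoc, ← Complex.exp_add]
  congr 1
  push_cast; ring

noncomputable def dirK (n : ℕ) (u : ℝ) : ℂ := ∑ k ∈ Finset.Icc (-(n : ℤ)) (n : ℤ), eI k u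

lemma dirK_cont (n : ℕ) : Continuous (dirK n) := by
  unfold dirK eI; continuity

lemma card_Icc_int (n : ℕ) : (Finset.Icc (-(n : ℤ)) (n : ℤ)).card = 2 * n + 1 := by
  rw [Int.card_Icc]; omega

lemma dirK_norm_le_card (n : ℕ) (u : ℝ) : ‖dirK n u‖ ≤ 2 * n + 1 := by
  calc ‖dirK n u‖ ≤ ∑ k ∈ Finset.Icc (-(n : ℤ)) (n : ℤ), ‖eI k u‖ := norm_sum_le _ _
    _ = ((2 * n + 1 : ℕ) : ℝ) := by
        simp only [show ∀ k t, ‖eI k t‖ = 1 from fun k t => by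
          simp [eI, Complex.norm_exp]]
        rw [Finset.sum_const, card_Icc_int]; simp
    _ = 2 * n + 1 := by push_cast; ring

lemma Icc_int_eq_map (n : ℕ) :
    Finset.Icc (-(n : ℤ)) (n : ℤ) =
      (Finset.range (2 * n + 1)).map
        (⟨fun j : ℕ => (j : ℤ) - n, fun a b h => by simpa using h⟩ : ℕ ↪ ℤ) := by
  ext x
  simp only [Finset.mem_Icc, Finset.mem_map, Finset.mem_range, Function.Embedding.coeFn_mk]
  constructor
  · intro h; exact ⟨(x + n).toNat, by omega, by show ((x + n).toNat : ℤ) - n = x; omega⟩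
  · rintro ⟨j, hj, rfl⟩; show -(n:ℤ) ≤ (j:ℤ) - n ∧ (j:ℤ) - n ≤ n; omega

lemma exp_I_ne_one {u : ℝ} (h0 : u ≠ 0) (hu : |u| ≤ Real.pi) :
    Complex.exp (Complex.I * u) ≠ 1 := by
  intro h
  rw [Complex.exp_eq_one_iff] at h
  obtain ⟨m, hm⟩ := h
  have h2 : (u : ℂ) * Complex.I = ((m : ℂ) * (2 * (Real.pi : ℂ))) * Complex.I := by
    linear_combination hm
  have h3 := mul_right_cancel₀ Complex.I_ne_zero h2
  have hu' : u = m * (2 * Real.pi) := by exact_mod_cast h3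
  have hπ := Real.pi_pos
  rcases eq_or_ne m 0 with rfl | hm0
  · simp at hu'; exact h0 hu'
  · have h1m : (1:ℝ) ≤ |(m:ℝ)| := by exact_mod_cast Int.one_le_abs hm0
    have : 2 * Real.pi ≤ |u| := by
      rw [hu', abs_mul, abs_of_pos (show (0:ℝ) < 2 * Real.pi by linarith)]
      nlinarith
    linarith

lemma dirK_norm_le_pi_div {n : ℕ} {u : ℝ} (h0 : u ≠ 0) (hu : |u| ≤ Real.pi) :
    ‖dirK n u‖ ≤ Real.pi / |u| := by
  have hπ := Real.pi_pos
  have habs : 0 < |u| := abs_pos.mpr h0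
  set z : ℂ := Complex.exp (Complex.I * u) with hz
  have hz0 : z ≠ 0 := Complex.exp_ne_zero _
  have hz1 : z ≠ 1 := exp_I_ne_one h0 hu
  have hznorm : ‖z‖ = 1 := by
    simp [hz, Complex.norm_exp]
  have hform : dirK n u = (∑ j ∈ Finset.range (2 * n + 1), z ^ j) * z ^ (-(n:ℤ)) := by
    rw [dirK, Icc_int_eq_map n, Finset.sum_map, Finset.sum_mul]
    apply Finset.sum_congr rfl
    intro j _
    show eI ((j:ℤ) - n) u = _
    rw [eI, show ((((j:ℤ) - n : ℤ)):ℂ) * Complex.I * u = (((j:ℤ) - n : ℤ)) * (Complex.I * u) by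
      push_cast; ring]
    rw [Complex.exp_int_mul, ← hz, zpow_sub₀ hz0, zpow_natCast, zpow_neg, zpow_natCast,
      div_eq_mul_inv]
  have hgeom : (∑ j ∈ Finset.range (2 * n + 1), z ^ j) = (z ^ (2 * n + 1) - 1) / (z - 1) :=
    geom_sum_eq hz1 _
  -- ‖z - 1‖ = 2|sin(u/2)|
  have hre : z.re = Real.cos u := by rw [hz, mul_comm]; exact Complex.exp_ofReal_mul_I_re u
  have him : z.im = Real.sin u := by rw [hz, mul_comm]; exact Complex.exp_ofReal_mul_I_im u
  have hsq : ‖z - 1‖ ^ 2 = (2 * |Real.sin (u / 2)|) ^ 2 := by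
    rw [Complex.sq_norm, Complex.normSq_apply,
      Complex.sub_re, Complex.sub_im, Complex.one_re, Complex.one_im, hre, him]
    have h1 := Real.sin_sq_add_cos_sq u
    have h2 := Real.sin_sq_add_cos_sq (u / 2)
    have h3 : Real.cos (u/2) ^ 2 = 1/2 + Real.cos u / 2 := by
      have := Real.cos_sq (u/2)
      rwa [show 2 * (u/2) = u by ring] at this
    nlinarith [_root_.sq_abs (Real.sin (u/2))]
  have hnorm_z1 : ‖z - 1‖ = 2 * |Real.sin (u / 2)| := by
    have h1 : (0:ℝ) ≤ ‖z - 1‖ := norm_nonneg _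
    have h2 : (0:ℝ) ≤ 2 * |Real.sin (u / 2)| := by positivity
    nlinarith
  -- lower bound on ‖z - 1‖
  have hlow : 2 * |u| / Real.pi ≤ ‖z - 1‖ := by
    rw [hnorm_z1]
    have hj := Real.mul_abs_le_abs_sin (x := u / 2) (by rw [abs_div]; simp; linarith [abs_nonneg u])
    have : |u / 2| = |u| / 2 := by rw [abs_div]; simp
    rw [this] at hj
    calc 2 * |u| / Real.pi = 2 * (2 / Real.pi * (|u| / 2)) := by field_simp
      _ ≤ 2 * |Real.sin (u / 2)| := by linarith
  have hpos : (0:ℝ) < 2 * |u| / Real.pi := by positivity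
  calc ‖dirK n u‖ = ‖z ^ (2*n+1) - 1‖ / ‖z - 1‖ * ‖z ^ (-(n:ℤ))‖ := by
        rw [hform, hgeom, norm_mul, norm_div]
    _ ≤ 2 / ‖z - 1‖ * 1 := by
        have hnum : ‖z ^ (2*n+1) - 1‖ ≤ 2 := by
          calc ‖z ^ (2*n+1) - 1‖ ≤ ‖z ^ (2*n+1)‖ + ‖(1:ℂ)‖ := norm_sub_le _ _
            _ = 2 := by rw [norm_pow, hznorm, one_pow, norm_one]; norm_num
        have hzn : ‖z ^ (-(n:ℤ))‖ = 1 := by rw [norm_zpow, hznorm, one_zpow]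
        rw [hzn]
        apply mul_le_mul_of_nonneg_right _ (by norm_num)
        exact div_le_div_of_nonneg_right hnum (le_of_lt (lt_of_lt_of_le hpos hlow))
    _ ≤ 2 / (2 * |u| / Real.pi) * 1 := by
        rw [mul_one, mul_one]
        exact div_le_div_of_nonneg_left (by norm_num) hpos hlow |>.trans_eq rfl
    _ = Real.pi / |u| := by rw [mul_one]; field_simp

lemma dirK_periodic (n : ℕ) : Function.Periodic (dirK n) (2 * Real.pi) := by
  intro t
  unfold dirK
  apply Finset.sum_congr rfl
  intro k _
  show Complex.exp _ = Complex.exp _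
  rw [show ((k : ℂ)) * Complex.I * ((t + 2 * Real.pi : ℝ) : ℂ)
      = (k : ℂ) * Complex.I * t + k * (2 * Real.pi * Complex.I) by push_cast; ring,
    Complex.exp_add, Complex.exp_int_mul_two_pi_mul_I, mul_one]

lemma dirK_integral_bound (n : ℕ) :
    ∫ u in (-Real.pi)..Real.pi, ‖dirK n u‖ ≤ 2 * Real.pi * (1 + Real.log (2 * n + 1)) := by
  have hπ := Real.pi_pos
  set δ : ℝ := Real.pi / (2 * n + 1) with hδ
  have hδpos : 0 < δ := by positivity
  have hδπ : δ ≤ Real.pi := by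
    rw [hδ, div_le_iff₀ (by positivity)]; nlinarith
  have hDi : ∀ a b : ℝ, IntervalIntegrable (fun u => ‖dirK n u‖) volume a b :=
    fun a b => ((dirK_cont n).norm).intervalIntegrable a b
  have hsplit1 : ∫ u in (-Real.pi)..Real.pi, ‖dirK n u‖
      = (∫ u in (-Real.pi)..(-δ), ‖dirK n u‖) + ∫ u in (-δ)..Real.pi, ‖dirK n u‖ :=
    (intervalIntegral.integral_add_adjacent_intervals (hDi _ _) (hDi _ _)).symm
  have hsplit2 : ∫ u in (-δ)..Real.pi, ‖dirK n u‖
      = (∫ u in (-δ)..δ, ‖dirK n u‖) + ∫ u in δ..Real.pi, ‖dirK n u‖ :=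
    (intervalIntegral.integral_add_adjacent_intervals (hDi _ _) (hDi _ _)).symm
  -- middle piece
  have hmid : ∫ u in (-δ)..δ, ‖dirK n u‖ ≤ 2 * Real.pi := by
    have h := intervalIntegral.norm_integral_le_of_norm_le_const
      (C := 2 * n + 1) (f := fun u => ‖dirK n u‖) (a := -δ) (b := δ) (fun x _ => by
        simpa using dirK_norm_le_card n x)
    have h2 : |δ - (-δ)| = 2 * δ := by rw [abs_of_pos (by linarith)]; ring
    rw [h2] at h
    have h3 : (2 * n + 1 : ℝ) * (2 * δ) = 2 * Real.pi := by
      rw [hδ]; field_simp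
    calc ∫ u in (-δ)..δ, ‖dirK n u‖ ≤ |∫ u in (-δ)..δ, ‖dirK n u‖| := le_abs_self _
      _ ≤ (2 * n + 1) * (2 * δ) := by simpa [Real.norm_eq_abs] using h
      _ = 2 * Real.pi := h3
  -- right piece
  have hone_div_int : ∀ a b : ℝ, 0 < a → 0 < b →
      IntervalIntegrable (fun u : ℝ => Real.pi * (1 / u)) volume a b := by
    intro a b ha hb
    apply ContinuousOn.intervalIntegrable
    apply ContinuousOn.mul continuousOn_const
    apply ContinuousOn.div continuousOn_const continuousOn_id
    intro x hx
    rcases Set.mem_uIcc.mp hx with ⟨h1, _⟩ | ⟨h1, _⟩ <;> exact ne_of_gt (by simp only [id_eq]; linarith)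
  have hright : ∫ u in δ..Real.pi, ‖dirK n u‖ ≤ Real.pi * Real.log (2 * n + 1) := by
    have hmono : ∫ u in δ..Real.pi, ‖dirK n u‖ ≤ ∫ u in δ..Real.pi, Real.pi * (1 / u) := by
      apply intervalIntegral.integral_mono_on hδπ (hDi _ _) (hone_div_int _ _ hδpos hπ)
      intro x hx
      obtain ⟨hx1, hx2⟩ := hx
      have hx0 : 0 < x := lt_of_lt_of_le hδpos hx1
      have := dirK_norm_le_pi_div (n := n) (u := x) (ne_of_gt hx0) (by rw [abs_of_pos hx0]; exact hx2)
      rw [abs_of_pos hx0] at this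
      simpa [div_eq_mul_inv] using this
    have hcalc : ∫ u in δ..Real.pi, Real.pi * (1 / u) = Real.pi * Real.log (2 * n + 1) := by
      rw [intervalIntegral.integral_const_mul, integral_one_div (by
        intro h; rcases Set.mem_uIcc.mp h with ⟨h1, _⟩ | ⟨h1, _⟩ <;> linarith)]
      congr 1
      rw [hδ]; field_simp
    rw [hcalc] at hmono; exact hmono
  -- left piece
  have hleft : ∫ u in (-Real.pi)..(-δ), ‖dirK n u‖ ≤ Real.pi * Real.log (2 * n + 1) := by
    have hmono : ∫ u in (-Real.pi)..(-δ), ‖dirK n u‖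
        ≤ ∫ u in (-Real.pi)..(-δ), Real.pi * (-(1 / u)) := by
      apply intervalIntegral.integral_mono_on (by linarith) (hDi _ _)
      · have : IntervalIntegrable (fun u : ℝ => Real.pi * (1 / u)) volume (-Real.pi) (-δ) := by
          apply ContinuousOn.intervalIntegrable
          apply ContinuousOn.mul continuousOn_const
          apply ContinuousOn.div continuousOn_const continuousOn_id
          intro x hx
          rcases Set.mem_uIcc.mp hx with ⟨h1, h2⟩ | ⟨h1, h2⟩ <;> exact ne_of_lt (by simp only [id_eq]; linarith)
        simpa [mul_neg, Pi.neg_def] using this.neg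
      · intro x hx
        obtain ⟨hx1, hx2⟩ := hx
        have hx0 : x < 0 := lt_of_le_of_lt hx2 (by linarith)
        have := dirK_norm_le_pi_div (n := n) (u := x) (ne_of_lt hx0) (by rw [abs_of_neg hx0]; linarith)
        rw [abs_of_neg hx0] at this
        calc ‖dirK n x‖ ≤ Real.pi / (-x) := this
          _ = Real.pi * (-(1 / x)) := by rw [div_neg, mul_neg, mul_one_div]
    have hcalc : ∫ u in (-Real.pi)..(-δ), Real.pi * (-(1 / u)) = Real.pi * Real.log (2 * n + 1) := by
      have : ∀ u : ℝ, Real.pi * (-(1 / u)) = -Real.pi * (1 / u) := fun u => by ring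
      simp_rw [this]
      rw [intervalIntegral.integral_const_mul, integral_one_div (by
        intro h; rcases Set.mem_uIcc.mp h with ⟨h1, h2⟩ | ⟨h1, h2⟩ <;> linarith)]
      rw [show (-δ) / (-Real.pi) = δ / Real.pi by rw [neg_div_neg_eq]]
      rw [show δ / Real.pi = ((2*(n:ℝ)+1))⁻¹ by rw [hδ]; field_simp]
      rw [Real.log_inv]
      ring
    rw [hcalc] at hmono; exact hmono
  rw [hsplit1, hsplit2]
  have hlog : 0 ≤ Real.log (2 * n + 1) := Real.log_nonneg (by push_cast; linarith)
  linarith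

lemma partialFourierSum_conv (f : ℝ → ℂ) (hf : Continuous f) (n : ℕ) (t : ℝ) :
    partialFourierSum f n t
      = (1 / (2 * (Real.pi:ℂ))) * ∫ s in (-Real.pi)..Real.pi, f s * dirK n (t - s) := by
  rw [partialFourierSum_eq]
  have h1 : ∀ k : ℤ, fourierCoef f k * eI k t
      = (1 / (2 * (Real.pi:ℂ))) * ∫ s in (-Real.pi)..Real.pi, f s * eI k (t - s) := by
    intro k
    rw [fourierCoef_eq, mul_assoc]
    congr 1
    rw [← intervalIntegral.integral_mul_const]
    apply intervalIntegral.integral_congr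
    intro s _
    show f s * eI (-k) s * eI k t = f s * eI k (t - s)
    rw [mul_assoc, eI_sub]
  simp_rw [h1]
  rw [← Finset.mul_sum]
  congr 1
  rw [← intervalIntegral.integral_finset_sum]
  · apply intervalIntegral.integral_congr
    intro s _
    show _ = f s * dirK n (t - s)
    simp only [dirK, Finset.mul_sum]
  · intro k _
    exact (hf.mul ((eI_cont k).comp (continuous_const.sub continuous_id))).intervalIntegrable _ _

lemma lebesgue_bound (f : ℝ → ℂ) (hf : Continuous f) {B : ℝ}
    (hB : ∀ s, ‖f s‖ ≤ B) (n : ℕ) (t : ℝ) :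
    ‖partialFourierSum f n t‖ ≤ 4 * Real.log (n + 2) * B := by
  have hπ := Real.pi_pos
  have hB0 : 0 ≤ B := le_trans (norm_nonneg _) (hB 0)
  have hDc : Continuous fun s => ‖dirK n (t - s)‖ :=
    ((dirK_cont n).comp (continuous_const.sub continuous_id)).norm
  have step1 : ‖partialFourierSum f n t‖
      ≤ 1 / (2 * Real.pi) * ∫ s in (-Real.pi)..Real.pi, B * ‖dirK n (t - s)‖ := by
    rw [partialFourierSum_conv f hf n t, norm_mul, norm_two_pi_inv]
    apply mul_le_mul_of_nonneg_left _ (by positivity)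
    calc ‖∫ s in (-Real.pi)..Real.pi, f s * dirK n (t - s)‖
        ≤ ∫ s in (-Real.pi)..Real.pi, ‖f s * dirK n (t - s)‖ :=
          intervalIntegral.norm_integral_le_integral_norm (by linarith)
      _ ≤ ∫ s in (-Real.pi)..Real.pi, B * ‖dirK n (t - s)‖ := by
          apply intervalIntegral.integral_mono_on (by linarith)
          · exact ((hf.mul ((dirK_cont n).comp
              (continuous_const.sub continuous_id))).norm).intervalIntegrable _ _
          · exact (continuous_const.mul hDc).intervalIntegrable _ _
          · intro x _
            rw [norm_mul]
            exact mul_le_mul_of_nonneg_right (hB x) (norm_nonneg _)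
  have step2 : ∫ s in (-Real.pi)..Real.pi, B * ‖dirK n (t - s)‖
      = B * ∫ u in (-Real.pi)..Real.pi, ‖dirK n u‖ := by
    rw [intervalIntegral.integral_const_mul]
    congr 1
    rw [intervalIntegral.integral_comp_sub_left (fun u => ‖dirK n u‖) t,
      show t - -Real.pi = t + Real.pi by ring]
    have hper : Function.Periodic (fun u => ‖dirK n u‖) (2 * Real.pi) := fun x => by
      simp only []; rw [dirK_periodic n x]
    have := hper.intervalIntegral_add_eq (t - Real.pi) (-Real.pi)
    rw [show t - Real.pi + 2 * Real.pi = t + Real.pi by ring,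
        show -Real.pi + 2 * Real.pi = Real.pi by ring] at this
    exact this
  have hlog2 : (0.6931471803 : ℝ) < Real.log 2 := Real.log_two_gt_d9
  have hlogmono : Real.log (2 * n + 1) ≤ 2 * Real.log (n + 2) := by
    calc Real.log (2 * n + 1) ≤ Real.log ((n + 2) ^ 2) := by
          apply Real.log_le_log (by positivity)
          push_cast; nlinarith [Nat.cast_nonneg (α := ℝ) n]
      _ = 2 * Real.log (n + 2) := by
          rw [Real.log_pow]; push_cast; ring
  have hlogge : (1:ℝ) ≤ 2 * Real.log (n + 2) := by
    have : Real.log 2 ≤ Real.log (n + 2) := by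
      apply Real.log_le_log (by norm_num)
      push_cast; linarith [Nat.cast_nonneg (α := ℝ) n]
    linarith
  have hlognn : 0 ≤ Real.log (n + 2) := by linarith
  calc ‖partialFourierSum f n t‖
      ≤ 1 / (2 * Real.pi) * ∫ s in (-Real.pi)..Real.pi, B * ‖dirK n (t - s)‖ := step1
    _ = 1 / (2 * Real.pi) * (B * ∫ u in (-Real.pi)..Real.pi, ‖dirK n u‖) := by rw [step2]
    _ ≤ 1 / (2 * Real.pi) * (B * (2 * Real.pi * (1 + Real.log (2 * n + 1)))) := by
        apply mul_le_mul_of_nonneg_left _ (by positivity)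
        apply mul_le_mul_of_nonneg_left (dirK_integral_bound n) hB0
    _ = B * (1 + Real.log (2 * n + 1)) := by field_simp
    _ ≤ B * (2 * Real.log (n + 2) + 2 * Real.log (n + 2)) := by
        apply mul_le_mul_of_nonneg_left _ hB0
        linarith
    _ = 4 * Real.log (n + 2) * B := by ring

lemma block_eq (f : ℝ → ℂ) (c : ℤ) (m : ℕ) (t : ℝ) :
    ∑ j ∈ Finset.Icc (c - m) (c + m), fourierCoef f j * eI j t
      = eI c t * partialFourierSum (fun s => eI (-c) s * f s) m t := by
  rw [partialFourierSum_eq, Finset.mul_sum]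
  have hmap : Finset.Icc (c - m) (c + m)
      = (Finset.Icc (-(m:ℤ)) (m:ℤ)).map (addRightEmbedding c) := by
    rw [Finset.map_add_right_Icc]
    congr 1 <;> ring
  rw [hmap, Finset.sum_map]
  apply Finset.sum_congr rfl
  intro k _
  simp only [addRightEmbedding_apply]
  rw [fourierCoef_shift, sub_neg_eq_add]
  rw [← mul_assoc, mul_comm (eI c t) (fourierCoef f (k + c)), mul_assoc, eI_mul]
  rw [add_comm c k]

lemma block_bound (f : ℝ → ℂ) (hf : Continuous f) {B : ℝ}
    (hB : ∀ s, ‖f s‖ ≤ B) (c : ℤ) (m : ℕ) (t : ℝ) :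
    ‖∑ j ∈ Finset.Icc (c - m) (c + m), fourierCoef f j * eI j t‖
      ≤ 4 * Real.log (m + 2) * B := by
  rw [block_eq, norm_mul, eI_norm, one_mul]
  exact lebesgue_bound _ ((eI_cont (-c)).mul hf) (fun s => by
    rw [Pi.mul_apply, norm_mul, eI_norm, one_mul]; exact hB s) m t

-- orthogonality

lemma integral_eI_eq_zero {m : ℤ} (hm : m ≠ 0) :
    ∫ t in (-Real.pi)..Real.pi, eI m t = 0 := by
  have hc : ((m:ℂ) * Complex.I) ≠ 0 :=
    mul_ne_zero (Int.cast_ne_zero.mpr hm) Complex.I_ne_zero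
  have : ∀ t : ℝ, eI m t = Complex.exp (((m:ℂ) * Complex.I) * t) := fun t => rfl
  simp_rw [this]
  rw [integral_exp_mul_complex hc]
  have : Complex.exp ((m:ℂ) * Complex.I * (Real.pi:ℝ))
      = Complex.exp ((m:ℂ) * Complex.I * ((-Real.pi : ℝ):ℝ)) := by
    rw [show ((m:ℂ) * Complex.I * (Real.pi:ℝ) : ℂ)
        = (m:ℂ) * Complex.I * ((-Real.pi : ℝ):ℝ) + m * (2 * Real.pi * Complex.I) by
      push_cast; ring]
    rw [Complex.exp_add, Complex.exp_int_mul_two_pi_mul_I, mul_one]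
  rw [this, sub_self, zero_div]

lemma fourierCoef_partialFourierSum (f : ℝ → ℂ) (M : ℕ) {k : ℤ} (hk : M < k.natAbs) :
    fourierCoef (partialFourierSum f M) k = 0 := by
  rw [fourierCoef_eq]
  have : (∫ t in (-Real.pi)..Real.pi, partialFourierSum f M t * eI (-k) t) = 0 := by
    have heq : ∀ t : ℝ, partialFourierSum f M t * eI (-k) t
        = ∑ j ∈ Finset.Icc (-(M:ℤ)) (M:ℤ), fourierCoef f j * eI (j + -k) t := by
      intro t
      rw [partialFourierSum_eq, Finset.sum_mul]
      apply Finset.sum_congr rfl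
      intro j _
      rw [mul_assoc, eI_mul]
    rw [intervalIntegral.integral_congr (g := fun t =>
      ∑ j ∈ Finset.Icc (-(M:ℤ)) (M:ℤ), fourierCoef f j * eI (j + -k) t) (fun t _ => heq t)]
    rw [intervalIntegral.integral_finset_sum]
    · apply Finset.sum_eq_zero
      intro j hj
      rw [intervalIntegral.integral_const_mul]
      rw [integral_eI_eq_zero]
      · rw [mul_zero]
      · rw [Finset.mem_Icc] at hj
        omega
    · intro j _
      exact (continuous_const.mul (eI_cont _)).intervalIntegrable _ _
  rw [this, mul_zero]

lemma fourierCoef_sub (f g : ℝ → ℂ) (hf : Continuous f) (hg : Continuous g) (k : ℤ) :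
    fourierCoef (fun s => f s - g s) k = fourierCoef f k - fourierCoef g k := by
  rw [fourierCoef_eq, fourierCoef_eq, fourierCoef_eq, ← mul_sub]
  congr 1
  rw [← intervalIntegral.integral_sub (f := fun t => f t * eI (-k) t) (g := fun t => g t * eI (-k) t) ((hf.mul (eI_cont _)).intervalIntegrable _ _)
    ((hg.mul (eI_cont _)).intervalIntegrable _ _)]
  apply intervalIntegral.integral_congr
  intro t _
  show (f t - g t) * eI (-k) t = _
  ring

lemma partialFourierSum_cont (f : ℝ → ℂ) (M : ℕ) : Continuous (partialFourierSum f M) := by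
  apply continuous_finset_sum
  intro k _
  exact continuous_const.mul (eI_cont k)

lemma coef_decay (f : ℝ → ℂ) (hf : Continuous f)
    (hconv : TendstoUniformly (fun N t => partialFourierSum f N t) f atTop)
    {ε : ℝ} (hε : 0 < ε) : ∃ M : ℕ, ∀ k : ℤ, M ≤ k.natAbs → ‖fourierCoef f k‖ ≤ ε := by
  rw [Metric.tendstoUniformly_iff] at hconv
  obtain ⟨M, hM⟩ := eventually_atTop.mp (hconv ε hε)
  refine ⟨M + 1, fun k hk => ?_⟩
  have h1 : ∀ t, ‖f t - partialFourierSum f M t‖ ≤ ε := fun t => by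
    have := hM M le_rfl t
    rw [dist_eq_norm] at this
    exact le_of_lt this
  have h2 : fourierCoef (fun s => f s - partialFourierSum f M s) k = fourierCoef f k := by
    rw [fourierCoef_sub f _ hf (partialFourierSum_cont f M),
      fourierCoef_partialFourierSum f M (by omega), sub_zero]
  rw [← h2]
  exact fourierCoef_norm_le _ h1 k

lemma periodic_bound (f : ℝ → ℂ) (hf : Continuous f)
    (hper : Function.Periodic f (2 * Real.pi)) : ∃ B, ∀ t, ‖f t‖ ≤ B := by
  have h2π : (0:ℝ) < 2 * Real.pi := by positivity
  obtain ⟨B, hB⟩ := (isCompact_Icc (a := (0:ℝ)) (b := 2 * Real.pi)).exists_bound_of_continuousOn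
    hf.continuousOn
  refine ⟨B, fun t => ?_⟩
  have hmem : t - ⌊t / (2 * Real.pi)⌋ * (2 * Real.pi) ∈ Set.Icc (0:ℝ) (2 * Real.pi) :=
    ⟨Int.sub_floor_div_mul_nonneg t h2π, le_of_lt (Int.sub_floor_div_mul_lt t h2π)⟩
  have heq : f (t - ⌊t / (2 * Real.pi)⌋ * (2 * Real.pi)) = f t :=
    hper.sub_int_mul_eq (n := ⌊t / (2 * Real.pi)⌋)
  rw [← heq]
  exact hB _ hmem

lemma sum_split (F : ℤ → ℂ) {a b c : ℤ} (hab : a ≤ b) (hbc : b ≤ c) :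
    (∑ j ∈ Finset.Icc a c, F j) + F b
      = (∑ j ∈ Finset.Icc a b, F j) + ∑ j ∈ Finset.Icc b c, F j := by
  have h1 : Finset.Icc a c = Finset.Icc a b ∪ Finset.Icc (b+1) c := by
    ext x; simp only [Finset.mem_Icc, Finset.mem_union]; omega
  have hd : Disjoint (Finset.Icc a b) (Finset.Icc (b+1) c) := by
    rw [Finset.disjoint_left]
    intro x hx hx'
    simp only [Finset.mem_Icc] at hx hx'
    omega
  have h2 : Finset.Icc b c = insert b (Finset.Icc (b+1) c) := by
    ext x; simp only [Finset.mem_Icc, Finset.mem_insert]; omega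
  rw [h1, Finset.sum_union hd, h2, Finset.sum_insert (by simp only [Finset.mem_Icc]; omega)]
  ring

lemma card_Icc_center (c : ℤ) (m : ℕ) : (Finset.Icc (c - m) (c + m)).card = 2 * m + 1 := by
  rw [Int.card_Icc]; omega

theorem modulation_uNorm_bound :
    ∃ c : ℝ, 0 < c ∧ ∀ f : ℝ → ℂ, Continuous f → Function.Periodic f (2 * Real.pi) →
      TendstoUniformly (fun N t => partialFourierSum f N t) f atTop →
      ∀ n : ℤ,
        TendstoUniformly
          (fun N t => partialFourierSum (fun s => Complex.exp ((n : ℂ) * Complex.I * s) * f s) N t)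
          (fun s => Complex.exp ((n : ℂ) * Complex.I * s) * f s) atTop ∧
        uNorm (fun s => Complex.exp ((n : ℂ) * Complex.I * s) * f s) ≤
          c * uNorm f * Real.log ((|n| : ℤ) + 2) := by
  refine ⟨7, by norm_num, ?_⟩
  intro f hf hper hconv n
  set n' : ℕ := n.natAbs with hn'
  set g : ℝ → ℂ := fun s => Complex.exp ((n : ℂ) * Complex.I * s) * f s with hg
  obtain ⟨B₀, hB₀⟩ := periodic_bound f hf hper
  have hB₀0 : 0 ≤ B₀ := le_trans (norm_nonneg _) (hB₀ 0)
  -- partial sums of f are uniformly bounded; uNorm is a true sup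
  have hSb : ∀ (N : ℕ) (t : ℝ), ‖partialFourierSum f N t‖ ≤ (2 * N + 1) * B₀ := by
    intro N t
    rw [partialFourierSum_eq]
    calc ‖∑ k ∈ Finset.Icc (-(N:ℤ)) (N:ℤ), fourierCoef f k * eI k t‖
        ≤ ∑ k ∈ Finset.Icc (-(N:ℤ)) (N:ℤ), ‖fourierCoef f k * eI k t‖ := norm_sum_le _ _
      _ ≤ ∑ _k ∈ Finset.Icc (-(N:ℤ)) (N:ℤ), B₀ := by
          apply Finset.sum_le_sum
          intro k _
          rw [norm_mul, eI_norm, mul_one]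
          exact fourierCoef_norm_le f hB₀ k
      _ = (2 * N + 1) * B₀ := by
          rw [Finset.sum_const, card_Icc_int]
          push_cast
          rw [nsmul_eq_mul]
          push_cast
          ring
  have hbdd1 : ∀ N : ℕ, BddAbove (Set.range fun t => ‖partialFourierSum f N t‖) := fun N =>
    ⟨(2 * N + 1) * B₀, by rintro x ⟨t, rfl⟩; exact hSb N t⟩
  have hconvM := hconv
  rw [Metric.tendstoUniformly_iff] at hconvM
  obtain ⟨N₀, hN₀⟩ := eventually_atTop.mp (hconvM 1 one_pos)
  have hbdd2 : BddAbove (Set.range fun N : ℕ => ⨆ t : ℝ, ‖partialFourierSum f N t‖) := by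
    refine ⟨(2 * N₀ + 1) * B₀ + B₀ + 1, ?_⟩
    rintro x ⟨N, rfl⟩
    rcases le_or_gt N₀ N with hN | hN
    · apply ciSup_le
      intro t
      have h1 := hN₀ N hN t
      rw [dist_eq_norm] at h1
      have h2 : ‖partialFourierSum f N t‖ ≤ ‖f t‖ + ‖f t - partialFourierSum f N t‖ := by
        have := norm_sub_le (f t) (f t - partialFourierSum f N t)
        simpa using this
      have h3 : (2 * (N₀:ℝ) + 1) * B₀ ≥ 0 := by positivity
      linarith [hB₀ t]
    · apply ciSup_le
      intro t
      have := hSb N t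
      have hcast : (2 * (N:ℝ) + 1) * B₀ ≤ (2 * (N₀:ℝ) + 1) * B₀ := by
        apply mul_le_mul_of_nonneg_right _ hB₀0
        have : (N:ℝ) ≤ (N₀:ℝ) := by exact_mod_cast le_of_lt hN
        linarith
      linarith
  have hS_le_u : ∀ (N : ℕ) (t : ℝ), ‖partialFourierSum f N t‖ ≤ uNorm f := fun N t =>
    le_trans (le_ciSup (hbdd1 N) t) (le_ciSup hbdd2 N)
  have hf_le_u : ∀ t, ‖f t‖ ≤ uNorm f := by
    intro t
    have htend : Tendsto (fun N => ‖partialFourierSum f N t‖) atTop (nhds ‖f t‖) :=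
      ((hconv.tendsto_at t).norm)
    exact le_of_tendsto htend (Eventually.of_forall fun N => hS_le_u N t)
  have hu0 : 0 ≤ uNorm f := le_trans (norm_nonneg _) (hf_le_u 0)
  have hlog2 : (0.6931471803 : ℝ) < Real.log 2 := Real.log_two_gt_d9
  have hlogn : Real.log 2 ≤ Real.log (n' + 2) := by
    apply Real.log_le_log (by norm_num)
    have : (0:ℝ) ≤ (n' : ℝ) := Nat.cast_nonneg n'
    linarith
  have hlognn : 0 < Real.log (n' + 2) := by linarith
  -- modulation identity
  have hid : ∀ (N : ℕ) (t : ℝ), partialFourierSum g N t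
      = eI n t * ∑ j ∈ Finset.Icc (-n - N) (-n + N), fourierCoef f j * eI j t := by
    intro N t
    have hbe := block_eq f (-n) N t
    simp only [neg_neg] at hbe
    rw [hbe, ← mul_assoc, eI_mul]
    rw [show n + -n = 0 by ring, eI_zero, one_mul]
    rfl
  -- decomposition of the shifted block
  have hdecomp : ∀ (N : ℕ) (t : ℝ), ∃ b cc : ℤ, ((N:ℤ) - n' ≤ (b.natAbs : ℤ)) ∧ cc.natAbs = N ∧
      (∑ j ∈ Finset.Icc (-n - N) (-n + N), fourierCoef f j * eI j t)
        = partialFourierSum f (N + n') t + fourierCoef f b * eI b t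
          - ∑ j ∈ Finset.Icc (cc - n') (cc + n'), fourierCoef f j * eI j t := by
    intro N t
    set F : ℤ → ℂ := fun j => fourierCoef f j * eI j t with hF
    have hfull : (∑ j ∈ Finset.Icc (-((N + n' : ℕ):ℤ)) ((N + n' : ℕ):ℤ), F j)
        = partialFourierSum f (N + n') t := (partialFourierSum_eq f (N + n') t).symm
    rcases le_or_gt 0 n with hn | hn
    · have hnn : (n' : ℤ) = n := by omega
      refine ⟨-n + N, (N:ℤ), by omega, by omega, ?_⟩
      have hsp := sum_split F (a := -n - (N:ℤ)) (b := -n + (N:ℤ)) (c := (N:ℤ) + n')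
        (by omega) (by omega)
      have e1 : Finset.Icc (-n - (N:ℤ)) ((N:ℤ) + n')
          = Finset.Icc (-((N + n' : ℕ):ℤ)) ((N + n' : ℕ):ℤ) := by
        congr 1 <;> push_cast <;> omega
      have e2 : Finset.Icc (-n + (N:ℤ)) ((N:ℤ) + n')
          = Finset.Icc ((N:ℤ) - n') ((N:ℤ) + n') := by
        congr 1; omega
      rw [e1, e2] at hsp
      rw [← hfull]
      linear_combination -hsp
    · have hnn : (n' : ℤ) = -n := by omega
      refine ⟨-n - N, -(N:ℤ), by omega, by omega, ?_⟩
      have hsp := sum_split F (a := -(N:ℤ) - n') (b := -n - (N:ℤ)) (c := -n + (N:ℤ))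
        (by omega) (by omega)
      have e1 : Finset.Icc (-(N:ℤ) - n') (-n + (N:ℤ))
          = Finset.Icc (-((N + n' : ℕ):ℤ)) ((N + n' : ℕ):ℤ) := by
        congr 1 <;> push_cast <;> omega
      have e2 : Finset.Icc (-(N:ℤ) - n') (-n - (N:ℤ))
          = Finset.Icc (-(N:ℤ) - n') (-(N:ℤ) + n') := by
        congr 1; omega
      rw [e1, e2] at hsp
      rw [← hfull]
      linear_combination -hsp
  -- the per-N bound
  have key : ∀ (N : ℕ) (t : ℝ),
      ‖partialFourierSum g N t‖ ≤ 7 * uNorm f * Real.log (n' + 2) := by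
    intro N t
    rw [hid N t, norm_mul, eI_norm, one_mul]
    obtain ⟨b, cc, hb, hcc, hdec⟩ := hdecomp N t
    rw [hdec]
    have h1 : ‖partialFourierSum f (N + n') t‖ ≤ uNorm f := hS_le_u _ t
    have h2 : ‖fourierCoef f b * eI b t‖ ≤ uNorm f := by
      rw [norm_mul, eI_norm, mul_one]; exact fourierCoef_norm_le f hf_le_u b
    have h3 : ‖∑ j ∈ Finset.Icc (cc - n') (cc + n'), fourierCoef f j * eI j t‖
        ≤ 4 * Real.log (n' + 2) * uNorm f := block_bound f hf hf_le_u cc n' t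
    have h4 := norm_sub_le
      (partialFourierSum f (N + n') t + fourierCoef f b * eI b t)
      (∑ j ∈ Finset.Icc (cc - n') (cc + n'), fourierCoef f j * eI j t)
    have h5 := norm_add_le (partialFourierSum f (N + n') t) (fourierCoef f b * eI b t)
    have h6 : (2:ℝ) ≤ 3 * Real.log (n' + 2) := by linarith
    have h7 : 2 * uNorm f ≤ 3 * Real.log (n' + 2) * uNorm f :=
      mul_le_mul_of_nonneg_right h6 hu0
    nlinarith [h1, h2, h3, h4, h5, h7]
  constructor
  · -- uniform convergence
    rw [Metric.tendstoUniformly_iff]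
    intro ε hε
    obtain ⟨M₁, hM₁⟩ := eventually_atTop.mp (hconvM (ε/3) (by positivity))
    have hd : (0:ℝ) < ε / (3 * (2 * n' + 1)) := by positivity
    obtain ⟨M₂, hM₂⟩ := coef_decay f hf hconv hd
    rw [eventually_atTop]
    refine ⟨M₁ + M₂ + n', fun N hN => fun t => ?_⟩
    rw [dist_eq_norm, hid N t]
    obtain ⟨b, cc, hb, hcc, hdec⟩ := hdecomp N t
    rw [hdec]
    have hfac : g t - eI n t * (partialFourierSum f (N + n') t + fourierCoef f b * eI b t
          - ∑ j ∈ Finset.Icc (cc - n') (cc + n'), fourierCoef f j * eI j t)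
        = eI n t * ((f t - partialFourierSum f (N + n') t) - fourierCoef f b * eI b t
          + ∑ j ∈ Finset.Icc (cc - n') (cc + n'), fourierCoef f j * eI j t) := by
      have hgt : g t = eI n t * f t := rfl
      rw [hgt]; ring
    rw [hfac, norm_mul, eI_norm, one_mul]
    have hA : ‖f t - partialFourierSum f (N + n') t‖ < ε / 3 := by
      have := hM₁ (N + n') (by omega) t
      rwa [dist_eq_norm] at this
    have hsmall : ε / (3 * (2 * n' + 1)) ≤ ε / 3 := by
      apply div_le_div_of_nonneg_left (le_of_lt hε) (by norm_num)
      have : (0:ℝ) ≤ (n' : ℝ) := Nat.cast_nonneg n'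
      linarith
    have hB : ‖fourierCoef f b * eI b t‖ ≤ ε / 3 := by
      rw [norm_mul, eI_norm, mul_one]
      exact le_trans (hM₂ b (by omega)) hsmall
    have hC : ‖∑ j ∈ Finset.Icc (cc - n') (cc + n'), fourierCoef f j * eI j t‖ ≤ ε / 3 := by
      calc ‖∑ j ∈ Finset.Icc (cc - n') (cc + n'), fourierCoef f j * eI j t‖
          ≤ ∑ j ∈ Finset.Icc (cc - n') (cc + n'), ‖fourierCoef f j * eI j t‖ := norm_sum_le _ _
        _ ≤ ∑ _j ∈ Finset.Icc (cc - n') (cc + n'), ε / (3 * (2 * n' + 1)) := by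
            apply Finset.sum_le_sum
            intro j hj
            rw [Finset.mem_Icc] at hj
            rw [norm_mul, eI_norm, mul_one]
            apply hM₂ j
            omega
        _ = ε / 3 := by
            rw [Finset.sum_const, card_Icc_center, nsmul_eq_mul]
            push_cast
            field_simp
    calc ‖(f t - partialFourierSum f (N + n') t) - fourierCoef f b * eI b t
          + ∑ j ∈ Finset.Icc (cc - n') (cc + n'), fourierCoef f j * eI j t‖
        ≤ ‖(f t - partialFourierSum f (N + n') t) - fourierCoef f b * eI b t‖
          + ‖∑ j ∈ Finset.Icc (cc - n') (cc + n'), fourierCoef f j * eI j t‖ := norm_add_le _ _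
      _ ≤ ‖f t - partialFourierSum f (N + n') t‖ + ‖fourierCoef f b * eI b t‖
          + ‖∑ j ∈ Finset.Icc (cc - n') (cc + n'), fourierCoef f j * eI j t‖ := by
          linarith [norm_sub_le (f t - partialFourierSum f (N + n') t) (fourierCoef f b * eI b t)]
      _ < ε := by linarith
  · -- the uNorm bound
    have hcast : ((|n| : ℤ) : ℝ) + 2 = (n' : ℝ) + 2 := by
      rw [Int.abs_eq_natAbs, ← hn']; push_cast; ring
    rw [hcast]
    have : uNorm g ≤ 7 * uNorm f * Real.log (n' + 2) := by
      apply ciSup_le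
      intro N
      apply ciSup_le
      intro t
      exact key N t
    exact this
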